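/- Let G = (V, E) be a graph with a linear order < on E. Then χ(G, x) = Σ_{F = (V, A_f) spanning forest with e(F)=0} Σ_{A_i ⊆ E_i(F)} x^{|V| − |A_f \ A_i|} (−1)^{|A_f \ A_i|}, i.e., the chromatic polynomial is the signed sum over all edge sets obtained from spanning forests with no externally active edges by deleting subsets of internally active edges (a form of the Broken-Cycle Theorem). -/

import Mathlib

open Finset

attribute [local instance] Classical.propDecidable

/-- A multigraph on vertex type `V` with edge index type `E` is given by a map
`ends : E → Sym2 V` (loops and parallel edges are allowed).  For an edge subset
`A ⊆ E`, `edgeGraph ends A` is the simple graph on `V` whose adjacency is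
witnessed by some edge of `A`; it determines the connected components of the
spanning subgraph `(V, A)`. -/
def edgeGraph {V E : Type} (ends : E → Sym2 V) (A : Finset E) : SimpleGraph V where
  Adj a b := a ≠ b ∧ ∃ e ∈ A, ends e = s(a, b)
  symm := by
    constructor
    rintro a b ⟨hab, e, he, hs⟩
    exact ⟨Ne.symm hab, e, he, by rw [hs, Sym2.eq_swap]⟩
  loopless := by constructor; rintro a ⟨h, -⟩; exact h rfl

/-- `kc ends A` is the number of connected components of the spanning subgraph `(V, A)`. -/
noncomputable def kc {V E : Type} (ends : E → Sym2 V) (A : Finset E) : ℕ :=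
  Nat.card (edgeGraph ends A).ConnectedComponent

/-- `(V, A)` is a spanning forest of `(V, E)`: it is a forest
(`|A| + k((V,A)) = |V|`, which rules out loops, parallel edges and cycles)
with as many connected components as the whole graph. -/
def IsSpanningForest {V E : Type} [Fintype V] [Fintype E] (ends : E → Sym2 V)
    (A : Finset E) : Prop :=
  A.card + kc ends A = Fintype.card V ∧ kc ends A = kc ends Finset.univ

/-- `F - e + f`. -/
def swapEdge {E : Type} [DecidableEq E] (A : Finset E) (e f : E) : Finset E :=
  insert f (A.erase e)

/-- `e` is internally active in the spanning forest `(V, A)`. -/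
def InternallyActive {V E : Type} [Fintype V] [Fintype E] [DecidableEq E] [LinearOrder E]
    (ends : E → Sym2 V) (A : Finset E) (e : E) : Prop :=
  e ∈ A ∧ ¬ ∃ f, f ∉ A ∧ e < f ∧ IsSpanningForest ends (swapEdge A e f)

/-- `f` is externally active in the spanning forest `(V, A)`. -/
def ExternallyActive {V E : Type} [Fintype V] [Fintype E] [DecidableEq E] [LinearOrder E]
    (ends : E → Sym2 V) (A : Finset E) (f : E) : Prop :=
  f ∉ A ∧ ¬ ∃ e, e ∈ A ∧ f < e ∧ IsSpanningForest ends (swapEdge A e f)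

/-- The set `E_i(F)` of internally active edges of the spanning forest `F = (V, A)`. -/
noncomputable def intAct {V E : Type} [Fintype V] [Fintype E] [DecidableEq E] [LinearOrder E]
    (ends : E → Sym2 V) (A : Finset E) : Finset E :=
  Finset.univ.filter (InternallyActive ends A)

/-- The set `E_e(F)` of externally active edges of the spanning forest `F = (V, A)`. -/
noncomputable def extAct {V E : Type} [Fintype V] [Fintype E] [DecidableEq E] [LinearOrder E]
    (ends : E → Sym2 V) (A : Finset E) : Finset E :=
  Finset.univ.filter (ExternallyActive ends A)

/-- Number of proper colorings of the multigraph `(V, ends)` with `n` colors. -/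
noncomputable def chromCount {V E : Type} [Fintype V] [Fintype E] (ends : E → Sym2 V)
    (n : ℕ) : ℕ :=
  Nat.card {c : V → Fin n // ∀ e : E, ∀ a b : V, ends e = s(a, b) → c a ≠ c b}

section Basic

open SimpleGraph

variable {V E : Type} {ends : E → Sym2 V}

lemma edgeGraph_mono {S T : Finset E} (h : S ⊆ T) : edgeGraph ends S ≤ edgeGraph ends T := by
  rintro a b ⟨hne, e, he, hs⟩
  exact ⟨hne, e, h he, hs⟩

lemma reach_mono {S T : Finset E} (h : S ⊆ T) {a b : V}
    (hr : (edgeGraph ends S).Reachable a b) : (edgeGraph ends T).Reachable a b :=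
  hr.mono (edgeGraph_mono h)

lemma reach_empty {a b : V} (h : (edgeGraph ends (∅ : Finset E)).Reachable a b) : a = b := by
  obtain ⟨w⟩ := h
  cases w with
  | nil => rfl
  | cons h p => exact absurd h.2 (by simp)

lemma kc_empty [Fintype V] : kc ends (∅ : Finset E) = Fintype.card V := by
  rw [kc, ← Nat.card_eq_fintype_card]
  refine (Nat.card_eq_of_bijective (edgeGraph ends (∅:Finset E)).connectedComponentMk ⟨?_, ?_⟩).symm
  · intro a b h
    exact reach_empty (SimpleGraph.ConnectedComponent.exact h)
  · exact Quot.exists_rep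

lemma reach_adj_of_mem {S : Finset E} {e : E} (he : e ∈ S) {a b : V} (hs : ends e = s(a, b)) :
    (edgeGraph ends S).Reachable a b := by
  by_cases hab : a = b
  · exact hab ▸ SimpleGraph.Reachable.refl a
  · exact SimpleGraph.Adj.reachable ⟨hab, e, he, hs⟩

lemma reach_insert_iff [DecidableEq E] {S : Finset E} {f : E} {a b : V} (hf : ends f = s(a, b)) {x y : V} :
    (edgeGraph ends (insert f S)).Reachable x y ↔
      (edgeGraph ends S).Reachable x y ∨
      ((edgeGraph ends S).Reachable x a ∧ (edgeGraph ends S).Reachable b y) ∨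
      ((edgeGraph ends S).Reachable x b ∧ (edgeGraph ends S).Reachable a y) := by
  constructor
  · rintro ⟨w⟩
    induction w with
    | nil => exact Or.inl (SimpleGraph.Reachable.refl _)
    | @cons x z y h p ih =>
      obtain ⟨hne, e, he, hs⟩ := h
      rcases Finset.mem_insert.mp he with rfl | heS
      · rw [hf] at hs
        rcases Sym2.eq_iff.mp hs with ⟨h1, h2⟩ | ⟨h1, h2⟩
        · subst h1; subst h2
          rcases ih with h1 | ⟨h1, h2⟩ | ⟨h1, h2⟩
          · exact Or.inr (Or.inl ⟨SimpleGraph.Reachable.refl _, h1⟩)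
          · exact Or.inl (h1.symm.trans h2)
          · exact Or.inl h2
        · subst h1; subst h2
          rcases ih with h1 | ⟨h1, h2⟩ | ⟨h1, h2⟩
          · exact Or.inr (Or.inr ⟨SimpleGraph.Reachable.refl _, h1⟩)
          · exact Or.inl h2
          · exact Or.inl (h1.symm.trans h2)
      · have hadj : (edgeGraph ends S).Reachable x z := SimpleGraph.Adj.reachable ⟨hne, e, heS, hs⟩
        rcases ih with h1 | ⟨h1, h2⟩ | ⟨h1, h2⟩
        · exact Or.inl (hadj.trans h1)
        · exact Or.inr (Or.inl ⟨hadj.trans h1, h2⟩)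
        · exact Or.inr (Or.inr ⟨hadj.trans h1, h2⟩)
  · have hab : (edgeGraph ends (insert f S)).Reachable a b :=
      reach_adj_of_mem (Finset.mem_insert_self f S) hf
    have hm : ∀ u v : V, (edgeGraph ends S).Reachable u v →
        (edgeGraph ends (insert f S)).Reachable u v :=
      fun u v h => reach_mono (Finset.subset_insert f S) h
    rintro (h1 | ⟨h1, h2⟩ | ⟨h1, h2⟩)
    · exact hm _ _ h1
    · exact ((hm _ _ h1).trans hab).trans (hm _ _ h2)
    · exact ((hm _ _ h1).trans hab.symm).trans (hm _ _ h2)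

end Basic
section Counting

open SimpleGraph

variable {V E : Type} {ends : E → Sym2 V}

lemma kc_eq_of_reach_iff {S T : Finset E}
    (h : ∀ x y : V, (edgeGraph ends S).Reachable x y ↔ (edgeGraph ends T).Reachable x y) :
    kc ends S = kc ends T := by
  refine Nat.card_eq_of_bijective
    (Quot.lift (fun v => (edgeGraph ends T).connectedComponentMk v)
      (fun v w r => ConnectedComponent.sound ((h v w).mp r))) ⟨?_, ?_⟩
  · intro c d
    refine Quot.induction_on₂ c d (fun v w hvw => ?_)
    exact ConnectedComponent.sound ((h v w).mpr (ConnectedComponent.exact hvw))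
  · intro c
    refine Quot.induction_on c (fun v => ⟨Quot.mk _ v, rfl⟩)

lemma kc_insert_of_reach [DecidableEq E] {S : Finset E} {f : E} {a b : V} (hf : ends f = s(a, b))
    (hr : (edgeGraph ends S).Reachable a b) : kc ends (insert f S) = kc ends S := by
  refine kc_eq_of_reach_iff (fun x y => ?_)
  rw [reach_insert_iff hf]
  constructor
  · rintro (h1 | ⟨h1, h2⟩ | ⟨h1, h2⟩)
    · exact h1
    · exact (h1.trans hr).trans h2
    · exact (h1.trans hr.symm).trans h2
  · exact Or.inl

lemma kc_insert_of_not_reach [Fintype V] [DecidableEq E] {S : Finset E} {f : E} {a b : V} (hf : ends f = s(a, b))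
    (hr : ¬ (edgeGraph ends S).Reachable a b) :
    kc ends S = kc ends (insert f S) + 1 := by
  set G := edgeGraph ends S with hG
  set G' := edgeGraph ends (insert f S) with hG'
  have hab : a ≠ b := fun h => hr (h ▸ SimpleGraph.Reachable.refl a)
  let φ : G.ConnectedComponent → G'.ConnectedComponent :=
    Quot.lift (fun v => G'.connectedComponentMk v)
      (fun v w r => ConnectedComponent.sound (reach_mono (Finset.subset_insert f S) r))
  have hinj : Function.Injective
      (fun c : {c : G.ConnectedComponent // c ≠ G.connectedComponentMk b} => φ c.val) := by
    rintro ⟨c, hc⟩ ⟨d, hd⟩ h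
    refine Subtype.ext ?_
    revert hc hd h
    refine Quot.induction_on₂ c d (fun v w hv hw h => ?_)
    have h' : G'.Reachable v w := ConnectedComponent.exact h
    rcases (reach_insert_iff hf).mp h' with h1 | ⟨h1, h2⟩ | ⟨h1, h2⟩
    · exact ConnectedComponent.sound h1
    · exact absurd (ConnectedComponent.sound h2.symm) hw
    · exact absurd (ConnectedComponent.sound h1) hv
  have hsurj : Function.Surjective
      (fun c : {c : G.ConnectedComponent // c ≠ G.connectedComponentMk b} => φ c.val) := by
    intro c'
    refine Quot.induction_on c' (fun v => ?_)
    by_cases hv : G.Reachable v b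
    · refine ⟨⟨G.connectedComponentMk a, fun h => hr (ConnectedComponent.exact h)⟩, ?_⟩
      show G'.connectedComponentMk a = Quot.mk G'.Reachable v
      refine ConnectedComponent.sound ?_
      exact (reach_adj_of_mem (Finset.mem_insert_self f S) hf).trans
        (reach_mono (Finset.subset_insert f S) hv.symm)
    · exact ⟨⟨G.connectedComponentMk v, fun h => hv (ConnectedComponent.exact h)⟩, rfl⟩
  have h1 : Nat.card {c : G.ConnectedComponent // c ≠ G.connectedComponentMk b} =
      Nat.card G'.ConnectedComponent := Nat.card_eq_of_bijective _ ⟨hinj, hsurj⟩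
  haveI : Fintype G.ConnectedComponent := Fintype.ofFinite _
  have h2 : Nat.card {c : G.ConnectedComponent // c ≠ G.connectedComponentMk b} =
      Nat.card G.ConnectedComponent - 1 := by
    rw [Nat.card_eq_fintype_card, Nat.card_eq_fintype_card]
    have := Fintype.card_subtype_compl (fun c : G.ConnectedComponent =>
      c = G.connectedComponentMk b)
    simpa [Fintype.card_subtype_eq] using this
  have h3 : 0 < Nat.card G.ConnectedComponent :=
    Nat.card_pos_iff.mpr ⟨⟨G.connectedComponentMk b⟩, inferInstance⟩
  show Nat.card G.ConnectedComponent = Nat.card G'.ConnectedComponent + 1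
  omega

end Counting
section Forest

open SimpleGraph

variable {V E : Type} {ends : E → Sym2 V}

lemma sym2_exists_eq (z : Sym2 V) : ∃ a b : V, z = s(a, b) := by
  induction z using Sym2.ind with | _ a b => exact ⟨a, b, rfl⟩

lemma kc_union_bounds [Fintype V] [DecidableEq E] (S U : Finset E) :
    kc ends (S ∪ U) ≤ kc ends S ∧ kc ends S ≤ kc ends (S ∪ U) + U.card := by
  induction U using Finset.induction_on with
  | empty => simp
  | @insert g U hg ih =>
    obtain ⟨a, b, hab⟩ := sym2_exists_eq (ends g)
    have hins : S ∪ insert g U = insert g (S ∪ U) := by rw [Finset.union_insert]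
    rw [hins, Finset.card_insert_of_notMem hg]
    by_cases hr : (edgeGraph ends (S ∪ U)).Reachable a b
    · rw [kc_insert_of_reach hab hr]
      omega
    · have := kc_insert_of_not_reach hab hr
      omega

lemma kc_le_of_subset [Fintype V] [DecidableEq E] {S T : Finset E} (h : S ⊆ T) : kc ends T ≤ kc ends S := by
  have := (kc_union_bounds (ends := ends) S (T \ S)).1
  rwa [Finset.union_sdiff_of_subset h] at this

lemma kc_ge_of_subset [Fintype V] [DecidableEq E] {S T : Finset E} (h : S ⊆ T) :
    kc ends S ≤ kc ends T + (T \ S).card := by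
  have := (kc_union_bounds (ends := ends) S (T \ S)).2
  rwa [Finset.union_sdiff_of_subset h] at this

lemma card_add_kc_ge [Fintype V] [DecidableEq E] (A : Finset E) :
    Fintype.card V ≤ A.card + kc ends A := by
  induction A using Finset.induction_on with
  | empty => simp [kc_empty]
  | @insert g A hg ih =>
    obtain ⟨a, b, hab⟩ := sym2_exists_eq (ends g)
    rw [Finset.card_insert_of_notMem hg]
    by_cases hr : (edgeGraph ends A).Reachable a b
    · rw [kc_insert_of_reach hab hr]; omega
    · have := kc_insert_of_not_reach hab hr; omega

lemma forest_subset [Fintype V] [DecidableEq E] {A B : Finset E} (hAB : A ⊆ B)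
    (hB : B.card + kc ends B = Fintype.card V) :
    A.card + kc ends A = Fintype.card V := by
  have h1 : (B \ A).card + A.card = B.card := Finset.card_sdiff_add_card_eq_card hAB
  have h2 := kc_ge_of_subset (ends := ends) hAB
  have h3 := card_add_kc_ge (ends := ends) A
  omega

lemma not_reach_erase_of_forest [Fintype V] [DecidableEq E] {B : Finset E} {e : E}
    (hB : B.card + kc ends B = Fintype.card V) (he : e ∈ B) {a b : V}
    (hab : ends e = s(a, b)) : ¬ (edgeGraph ends (B.erase e)).Reachable a b := by
  intro hr
  have h1 : kc ends (insert e (B.erase e)) = kc ends (B.erase e) := kc_insert_of_reach hab hr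
  rw [Finset.insert_erase he] at h1
  have h2 : (B.erase e).card + kc ends (B.erase e) = Fintype.card V :=
    forest_subset (Finset.erase_subset e B) hB
  have h3 : (B.erase e).card + 1 = B.card := Finset.card_erase_add_one he
  omega

lemma kc_erase_of_forest [Fintype V] [DecidableEq E] {B : Finset E} {e : E}
    (hB : B.card + kc ends B = Fintype.card V) (he : e ∈ B) :
    kc ends (B.erase e) = kc ends B + 1 := by
  obtain ⟨a, b, hab⟩ := sym2_exists_eq (ends e)
  have hnr := not_reach_erase_of_forest hB he hab
  have h1 : kc ends (B.erase e) = kc ends (insert e (B.erase e)) + 1 :=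
    kc_insert_of_not_reach hab hnr
  rwa [Finset.insert_erase he] at h1

lemma swap_forest_iff [Fintype V] [Fintype E] [DecidableEq E] {B : Finset E} {e f : E}
    (hBsf : IsSpanningForest ends B) (he : e ∈ B) (hf : f ∉ B) {a b : V}
    (hab : ends f = s(a, b)) :
    IsSpanningForest ends (swapEdge B e f) ↔
      ¬ (edgeGraph ends (B.erase e)).Reachable a b := by
  obtain ⟨hBf, hBs⟩ := hBsf
  have hfB' : f ∉ B.erase e := fun h => hf (Finset.erase_subset e B h)
  have hsw : swapEdge B e f = insert f (B.erase e) := rfl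
  have hcard : (swapEdge B e f).card = B.card := by
    rw [hsw, Finset.card_insert_of_notMem hfB']
    exact Finset.card_erase_add_one he
  have hB'f : (B.erase e).card + kc ends (B.erase e) = Fintype.card V :=
    forest_subset (Finset.erase_subset e B) hBf
  have hkcB' : kc ends (B.erase e) = kc ends B + 1 := kc_erase_of_forest hBf he
  have h3 : (B.erase e).card + 1 = B.card := Finset.card_erase_add_one he
  constructor
  · rintro ⟨hsf1, hsf2⟩ hr
    have h1 : kc ends (swapEdge B e f) = kc ends (B.erase e) := by
      rw [hsw]; exact kc_insert_of_reach hab hr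
    omega
  · intro hnr
    have h1 : kc ends (B.erase e) = kc ends (swapEdge B e f) + 1 := by
      rw [hsw]; exact kc_insert_of_not_reach hab hnr
    exact ⟨by omega, by omega⟩

lemma reach_of_kc_eq [Fintype V] [DecidableEq E] {S T : Finset E} (hST : S ⊆ T) (hkc : kc ends S = kc ends T)
    {u v : V} (hr : (edgeGraph ends T).Reachable u v) : (edgeGraph ends S).Reachable u v := by
  let φ : (edgeGraph ends S).ConnectedComponent → (edgeGraph ends T).ConnectedComponent :=
    Quot.lift (fun v => (edgeGraph ends T).connectedComponentMk v)
      (fun v w r => ConnectedComponent.sound (reach_mono hST r))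
  have hsurj : Function.Surjective φ := by
    intro c
    induction c using Quot.ind with
    | _ v => exact ⟨Quot.mk _ v, rfl⟩
  haveI : Fintype (edgeGraph ends S).ConnectedComponent := Fintype.ofFinite _
  haveI : Fintype (edgeGraph ends T).ConnectedComponent := Fintype.ofFinite _
  have hcard : Fintype.card (edgeGraph ends S).ConnectedComponent =
      Fintype.card (edgeGraph ends T).ConnectedComponent := by
    rw [← Nat.card_eq_fintype_card, ← Nat.card_eq_fintype_card]; exact hkc
  have hbij : Function.Bijective φ :=
    (Fintype.bijective_iff_surjective_and_card φ).mpr ⟨hsurj, hcard⟩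
  have h := hbij.1 (a₁ := (edgeGraph ends S).connectedComponentMk u)
    (a₂ := (edgeGraph ends S).connectedComponentMk v) (ConnectedComponent.sound hr)
  exact ConnectedComponent.exact h

lemma reach_transfer {S T : Finset E}
    (h : ∀ f ∈ S, ∀ a b : V, ends f = s(a, b) → (edgeGraph ends T).Reachable a b)
    {u v : V} (hr : (edgeGraph ends S).Reachable u v) : (edgeGraph ends T).Reachable u v := by
  obtain ⟨w⟩ := hr
  induction w with
  | nil => exact SimpleGraph.Reachable.refl _
  | @cons x z y hadj p ih =>
    obtain ⟨hne, e, heS, hs⟩ := hadj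
    exact (h e heS x z hs).trans ih

lemma kc_eq_of_spanned [Fintype V] [DecidableEq E] {B C : Finset E} (hBC : B ⊆ C)
    (h : ∀ f ∈ C, ∀ a b : V, ends f = s(a, b) → (edgeGraph ends B).Reachable a b) :
    kc ends C = kc ends B := by
  have key : ∀ U : Finset E, U ⊆ C → kc ends (B ∪ U) = kc ends B := by
    intro U
    induction U using Finset.induction_on with
    | empty => simp
    | @insert g U hg ih =>
      intro hUC
      obtain ⟨a, b, hab⟩ := sym2_exists_eq (ends g)
      have hins : B ∪ insert g U = insert g (B ∪ U) := by rw [Finset.union_insert]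
      have hr : (edgeGraph ends (B ∪ U)).Reachable a b :=
        reach_mono Finset.subset_union_left (h g (hUC (Finset.mem_insert_self g U)) a b hab)
      rw [hins, kc_insert_of_reach hab hr]
      exact ih (fun x hx => hUC (Finset.mem_insert_of_mem hx))
  have := key (C \ B) Finset.sdiff_subset
  rwa [Finset.union_sdiff_of_subset hBC] at this

lemma forest_two_erase [Fintype V] [DecidableEq E] {B : Finset E} {f f' : E}
    (hB : B.card + kc ends B = Fintype.card V) (hf : f ∈ B) (hf' : f' ∈ B) (hne : f ≠ f')
    {u v : V} (h1 : (edgeGraph ends (B.erase f)).Reachable u v)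
    (h2 : (edgeGraph ends (B.erase f')).Reachable u v) :
    (edgeGraph ends ((B.erase f).erase f')).Reachable u v := by
  by_contra hD
  set D := (B.erase f).erase f' with hDdef
  obtain ⟨a, b, hab⟩ := sym2_exists_eq (ends f)
  obtain ⟨a', b', hab'⟩ := sym2_exists_eq (ends f')
  have hBf : B.erase f = insert f' D := by
    rw [hDdef, Finset.insert_erase (Finset.mem_erase.mpr ⟨Ne.symm hne, hf'⟩)]
  have hBf' : B.erase f' = insert f D := by
    rw [hDdef, Finset.erase_right_comm,
      Finset.insert_erase (Finset.mem_erase.mpr ⟨hne, hf⟩)]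
  rw [hBf] at h1
  rw [hBf'] at h2
  have hC2 : ¬ (edgeGraph ends (B.erase f)).Reachable a b :=
    not_reach_erase_of_forest hB hf hab
  rw [hBf] at hC2
  have hedge : (edgeGraph ends (insert f' D)).Reachable a' b' :=
    reach_adj_of_mem (Finset.mem_insert_self f' D) hab'
  have hm : ∀ x y : V, (edgeGraph ends D).Reachable x y →
      (edgeGraph ends (insert f' D)).Reachable x y :=
    fun x y h => reach_mono (Finset.subset_insert f' D) h
  rcases (reach_insert_iff hab').mp h1 with hr1 | ⟨hu1, hv1⟩ | ⟨hu1, hv1⟩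
  · exact hD hr1
  all_goals rcases (reach_insert_iff hab).mp h2 with hr2 | ⟨hu2, hv2⟩ | ⟨hu2, hv2⟩
  · exact hD hr2
  · -- hu1 : u~a', hv1 : b'~v ; hu2 : u~a, hv2 : b~v
    exact hC2 (((hm _ _ (hu2.symm.trans hu1)).trans hedge).trans (hm _ _ (hv1.trans hv2.symm)))
  · -- hu1 : u~a', hv1 : b'~v ; hu2 : u~b, hv2 : a~v
    exact hC2 (((hm _ _ (hv2.trans hv1.symm)).trans hedge.symm).trans
      (hm _ _ (hu1.symm.trans hu2)))
  · exact hD hr2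
  · -- hu1 : u~b', hv1 : a'~v ; hu2 : u~a, hv2 : b~v
    exact hC2 (((hm _ _ (hu2.symm.trans hu1)).trans hedge.symm).trans
      (hm _ _ (hv1.trans hv2.symm)))
  · -- hu1 : u~b', hv1 : a'~v ; hu2 : u~b, hv2 : a~v
    exact hC2 (((hm _ _ (hv2.trans hv1.symm)).trans hedge).trans (hm _ _ (hu1.symm.trans hu2)))

lemma crux [Fintype V] [DecidableEq E] {S : Finset E} {u v : V} :
    ∀ n (B : Finset E), (B \ S).card = n →
      B.card + kc ends B = Fintype.card V → S ⊆ B →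
      (edgeGraph ends B).Reachable u v → ¬ (edgeGraph ends S).Reachable u v →
      ∃ g ∈ B, g ∉ S ∧ ¬ (edgeGraph ends (B.erase g)).Reachable u v := by
  intro n
  induction n using Nat.strong_induction_on with
  | _ n IH =>
    intro B hn hBf hSB hru hnr
    have hne : (B \ S).Nonempty := by
      rw [Finset.sdiff_nonempty]
      intro hBS
      have : S = B := Finset.Subset.antisymm hSB hBS
      exact hnr (this ▸ hru)
    obtain ⟨f₀, hf₀⟩ := hne
    obtain ⟨hf₀B, hf₀S⟩ := Finset.mem_sdiff.mp hf₀
    by_cases hc : (edgeGraph ends (B.erase f₀)).Reachable u v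
    · have hlt : ((B.erase f₀) \ S).card < n := by
        have : (B.erase f₀) \ S = (B \ S).erase f₀ := by
          ext x; simp [Finset.mem_erase, Finset.mem_sdiff]; tauto
        have hpos : 0 < (B \ S).card := Finset.card_pos.mpr ⟨f₀, hf₀⟩
        rw [this, Finset.card_erase_of_mem hf₀]
        omega
      obtain ⟨g, hgB, hgS, hg⟩ := IH _ hlt (B.erase f₀) rfl
        (forest_subset (Finset.erase_subset f₀ B) hBf)
        (fun x hx => Finset.mem_erase.mpr ⟨fun h => hf₀S (h ▸ hx), hSB hx⟩) hc hnr
      have hgB' : g ∈ B := Finset.erase_subset f₀ B hgB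
      have hgne : g ≠ f₀ := (Finset.mem_erase.mp hgB).1
      refine ⟨g, hgB', hgS, fun hr => ?_⟩
      exact hg (forest_two_erase hBf hf₀B hgB' (Ne.symm hgne) hc hr)
    · exact ⟨f₀, hf₀B, hf₀S, hc⟩

end Forest
section Greedy

open SimpleGraph

variable {V E : Type}

/-- `f` is processed strictly before `e` in the greedy scan for target set `A`:
edges of `A` in increasing order first, then edges outside `A` in decreasing order. -/
def Qlt [LinearOrder E] (A : Finset E) (f e : E) : Prop :=
  (f ∈ A ∧ e ∈ A ∧ f < e) ∨ (f ∈ A ∧ e ∉ A) ∨ (f ∉ A ∧ e ∉ A ∧ e < f)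

lemma qlt_irrefl [LinearOrder E] (A : Finset E) (e : E) : ¬ Qlt A e e := by
  simp [Qlt, lt_irrefl]

lemma qlt_trans [LinearOrder E] {A : Finset E} {f g h : E}
    (h1 : Qlt A f g) (h2 : Qlt A g h) : Qlt A f h := by
  rcases h1 with ⟨ha1, hb1, hl1⟩ | ⟨ha1, hb1⟩ | ⟨ha1, hb1, hl1⟩ <;>
    rcases h2 with ⟨ha2, hb2, hl2⟩ | ⟨ha2, hb2⟩ | ⟨ha2, hb2, hl2⟩ <;>
    first
      | exact Or.inl ⟨ha1, hb2, hl1.trans hl2⟩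
      | exact Or.inr (Or.inl ⟨ha1, hb2⟩)
      | exact Or.inr (Or.inr ⟨ha1, hb2, hl2.trans hl1⟩)
      | exact absurd ha2 hb1
      | exact absurd hb1 ha2

lemma qlt_trichotomy [LinearOrder E] (A : Finset E) {e f : E} (hne : e ≠ f) :
    Qlt A e f ∨ Qlt A f e := by
  by_cases he : e ∈ A <;> by_cases hf : f ∈ A <;>
    rcases lt_or_gt_of_ne hne with hl | hl
  · exact Or.inl (Or.inl ⟨he, hf, hl⟩)
  · exact Or.inr (Or.inl ⟨hf, he, hl⟩)
  · exact Or.inl (Or.inr (Or.inl ⟨he, hf⟩))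
  · exact Or.inl (Or.inr (Or.inl ⟨he, hf⟩))
  · exact Or.inr (Or.inr (Or.inl ⟨hf, he⟩))
  · exact Or.inr (Or.inr (Or.inl ⟨hf, he⟩))
  · exact Or.inr (Or.inr (Or.inr ⟨hf, he, hl⟩))
  · exact Or.inl (Or.inr (Or.inr ⟨he, hf, hl⟩))

/-- The set of edges processed strictly before `e`. -/
noncomputable def Qset [Fintype E] [LinearOrder E] (A : Finset E) (e : E) : Finset E :=
  Finset.univ.filter (fun f => Qlt A f e)

lemma mem_Qset [Fintype E] [LinearOrder E] {A : Finset E} {e f : E} :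
    f ∈ Qset A e ↔ Qlt A f e := by
  simp [Qset]

/-- `e`'s endpoints are joined in the spanning subgraph `(V, S)`. -/
def endsConn (ends : E → Sym2 V) (S : Finset E) (e : E) : Prop :=
  ∀ a b : V, ends e = s(a, b) → (edgeGraph ends S).Reachable a b

lemma endsConn_mono {ends : E → Sym2 V} {S T : Finset E} (h : S ⊆ T) {e : E}
    (hc : endsConn ends S e) : endsConn ends T e :=
  fun a b hab => reach_mono h (hc a b hab)

/-- The greedy spanning forest associated to an edge set `A`. -/
noncomputable def greedyB [Fintype E] [LinearOrder E] (ends : E → Sym2 V) (A : Finset E) :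
    Finset E :=
  Finset.univ.filter (fun e => ¬ endsConn ends (Qset A e) e)

lemma mem_greedyB [Fintype E] [LinearOrder E] {ends : E → Sym2 V} {A : Finset E} {e : E} :
    e ∈ greedyB ends A ↔ ¬ endsConn ends (Qset A e) e := by
  simp [greedyB]

variable {ends : E → Sym2 V}

lemma greedy_reach [Fintype E] [DecidableEq E] [LinearOrder E] (A : Finset E) :
    ∀ n (e : E), (Qset A e).card = n →
      endsConn ends ((greedyB ends A) ∩ insert e (Qset A e)) e := by
  intro n
  induction n using Nat.strong_induction_on with
  | _ n IH =>
    intro e hn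
    by_cases heB : e ∈ greedyB ends A
    · intro a b hab
      exact reach_adj_of_mem (Finset.mem_inter.mpr ⟨heB, Finset.mem_insert_self _ _⟩) hab
    · have hconn : endsConn ends (Qset A e) e := by
        by_contra h
        exact heB (mem_greedyB.mpr h)
      intro a b hab
      refine reach_transfer ?_ (hconn a b hab)
      intro f hf c d hcd
      have hflt : Qlt A f e := mem_Qset.mp hf
      have hsub : Qset A f ⊆ Qset A e := fun g hg =>
        mem_Qset.mpr (qlt_trans (mem_Qset.mp hg) hflt)
      have hne : Qset A f ≠ Qset A e := by
        intro hEq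
        exact qlt_irrefl A f (mem_Qset.mp (hEq ▸ hf))
      have hlt : (Qset A f).card < n := hn ▸ Finset.card_lt_card (hsub.ssubset_of_ne hne)
      have hrec := IH _ hlt f rfl c d hcd
      refine reach_mono ?_ hrec
      intro g hg
      obtain ⟨hg1, hg2⟩ := Finset.mem_inter.mp hg
      refine Finset.mem_inter.mpr ⟨hg1, ?_⟩
      rcases Finset.mem_insert.mp hg2 with rfl | hg3
      · exact Finset.mem_insert_of_mem hf
      · exact Finset.mem_insert_of_mem (hsub hg3)

lemma exists_qlt_max [LinearOrder E] (A : Finset E) {S : Finset E} (hS : S.Nonempty) :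
    ∃ e ∈ S, ∀ f ∈ S, f ≠ e → Qlt A f e := by
  classical
  induction S using Finset.induction_on with
  | empty => exact absurd hS (by simp)
  | @insert a S ha ih =>
    rcases S.eq_empty_or_nonempty with rfl | hS'
    · exact ⟨a, Finset.mem_insert_self a _, fun f hf hne => by
        simp only [Finset.mem_insert, Finset.notMem_empty, or_false] at hf
        exact absurd hf hne⟩
    · obtain ⟨m, hmS, hmax⟩ := ih hS'
      have ham : a ≠ m := fun h => ha (h ▸ hmS)
      rcases qlt_trichotomy A ham with h1 | h1
      · refine ⟨m, Finset.mem_insert_of_mem hmS, fun f hf hne => ?_⟩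
        rcases Finset.mem_insert.mp hf with rfl | hfS
        · exact h1
        · exact hmax f hfS hne
      · refine ⟨a, Finset.mem_insert_self a _, fun f hf hne => ?_⟩
        rcases Finset.mem_insert.mp hf with rfl | hfS
        · exact absurd rfl hne
        · by_cases hfm : f = m
          · exact hfm ▸ h1
          · exact qlt_trans (hmax f hfS hfm) h1

lemma indep_of_qlocal [Fintype V] [Fintype E] [DecidableEq E] [LinearOrder E] (A : Finset E) :
    ∀ n (S : Finset E), S.card = n →
      (∀ e ∈ S, ¬ endsConn ends (S ∩ Qset A e) e) →
      S.card + kc ends S = Fintype.card V := by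
  intro n
  induction n using Nat.strong_induction_on with
  | _ n IH =>
    intro S hn hloc
    rcases S.eq_empty_or_nonempty with rfl | hS
    · simp [kc_empty]
    · obtain ⟨e, heS, hmax⟩ := exists_qlt_max A hS
      set S' := S.erase e with hS'def
      have hsub : S' ⊆ S ∩ Qset A e := by
        intro g hg
        obtain ⟨hgne, hgS⟩ := Finset.mem_erase.mp hg
        exact Finset.mem_inter.mpr ⟨hgS, mem_Qset.mpr (hmax g hgS hgne)⟩
      have hnr : ¬ endsConn ends S' e := fun hc =>
        hloc e heS (endsConn_mono hsub hc)
      obtain ⟨a, b, hab⟩ := sym2_exists_eq (ends e)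
      have hnr' : ¬ (edgeGraph ends S').Reachable a b := by
        intro hr
        refine hnr (fun c d hcd => ?_)
        rw [hab] at hcd
        rcases Sym2.eq_iff.mp hcd with ⟨h1, h2⟩ | ⟨h1, h2⟩
        · exact h1 ▸ h2 ▸ hr
        · exact h1 ▸ h2 ▸ hr.symm
      have hkc : kc ends S' = kc ends (insert e S') + 1 := kc_insert_of_not_reach hab hnr'
      rw [Finset.insert_erase heS] at hkc
      have hcard : S'.card + 1 = S.card := Finset.card_erase_add_one heS
      have hlt : S'.card < n := by omega
      have hloc' : ∀ f ∈ S', ¬ endsConn ends (S' ∩ Qset A f) f := by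
        intro f hf hc
        have hfS : f ∈ S := (Finset.mem_erase.mp hf).2
        have hEq : S' ∩ Qset A f = S ∩ Qset A f := by
          ext g
          simp only [Finset.mem_inter, hS'def, Finset.mem_erase]
          constructor
          · rintro ⟨⟨-, hg1⟩, hg2⟩; exact ⟨hg1, hg2⟩
          · rintro ⟨hg1, hg2⟩
            refine ⟨⟨fun hge => ?_, hg1⟩, hg2⟩
            subst hge
            exact qlt_irrefl A f
              (qlt_trans (hmax f hfS (Finset.mem_erase.mp hf).1) (mem_Qset.mp hg2))
        rw [hEq] at hc
        exact hloc f hfS hc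
      have := IH _ hlt S' rfl hloc'
      omega

lemma greedyB_indep [Fintype V] [Fintype E] [DecidableEq E] [LinearOrder E] (A : Finset E) :
    (greedyB ends A).card + kc ends (greedyB ends A) = Fintype.card V := by
  refine indep_of_qlocal A _ _ rfl (fun e he hc => ?_)
  exact (mem_greedyB.mp he) (endsConn_mono Finset.inter_subset_right hc)

lemma greedyB_sf [Fintype V] [Fintype E] [DecidableEq E] [LinearOrder E] (A : Finset E) :
    IsSpanningForest ends (greedyB ends A) := by
  refine ⟨greedyB_indep A, ?_⟩
  have h1 : kc ends (Finset.univ : Finset E) = kc ends (greedyB ends A) := by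
    refine kc_eq_of_spanned (Finset.subset_univ _) (fun f _ a b hab => ?_)
    have := greedy_reach A _ f rfl a b hab
    exact reach_mono Finset.inter_subset_left this
  exact h1.symm

lemma endsConn_of_not_greedy [Fintype E] [DecidableEq E] [LinearOrder E] {A : Finset E}
    {f : E} (hf : f ∉ greedyB ends A) :
    endsConn ends ((greedyB ends A) ∩ Qset A f) f := by
  have hEq : (greedyB ends A) ∩ insert f (Qset A f) = (greedyB ends A) ∩ Qset A f := by
    ext g
    simp only [Finset.mem_inter, Finset.mem_insert]
    constructor
    · rintro ⟨hg1, rfl | hg2⟩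
      · exact absurd hg1 hf
      · exact ⟨hg1, hg2⟩
    · rintro ⟨hg1, hg2⟩
      exact ⟨hg1, Or.inr hg2⟩
  intro a b hab
  have h1 := greedy_reach A _ f rfl a b hab
  rwa [hEq] at h1

lemma greedy_extAct [Fintype V] [Fintype E] [DecidableEq E] [LinearOrder E] {A : Finset E}
    {f : E} (hfA : f ∈ A) (hf : f ∉ greedyB ends A) :
    ExternallyActive ends (greedyB ends A) f := by
  refine ⟨hf, ?_⟩
  rintro ⟨e, heB, hfe, hsf⟩
  obtain ⟨a, b, hab⟩ := sym2_exists_eq (ends f)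
  have hr : (edgeGraph ends ((greedyB ends A) ∩ Qset A f)).Reachable a b :=
    endsConn_of_not_greedy hf a b hab
  have hsub : (greedyB ends A) ∩ Qset A f ⊆ (greedyB ends A).erase e := by
    intro g hg
    obtain ⟨hg1, hg2⟩ := Finset.mem_inter.mp hg
    refine Finset.mem_erase.mpr ⟨?_, hg1⟩
    rintro rfl
    rcases mem_Qset.mp hg2 with ⟨-, -, hl⟩ | ⟨-, hnA⟩ | ⟨-, hnA, -⟩
    · exact absurd hfe (not_lt_of_gt hl)
    · exact hnA hfA
    · exact hnA hfA
  have := (swap_forest_iff (greedyB_sf A) heB hf hab).mp hsf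
  exact this (reach_mono hsub hr)

lemma greedy_intAct [Fintype V] [Fintype E] [DecidableEq E] [LinearOrder E] {A : Finset E}
    {e : E} (heA : e ∉ A) (he : e ∈ greedyB ends A) :
    InternallyActive ends (greedyB ends A) e := by
  refine ⟨he, ?_⟩
  rintro ⟨f, hfB, hef, hsf⟩
  obtain ⟨a, b, hab⟩ := sym2_exists_eq (ends f)
  have hr : (edgeGraph ends ((greedyB ends A) ∩ Qset A f)).Reachable a b :=
    endsConn_of_not_greedy hfB a b hab
  have hsub : (greedyB ends A) ∩ Qset A f ⊆ (greedyB ends A).erase e := by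
    intro g hg
    obtain ⟨hg1, hg2⟩ := Finset.mem_inter.mp hg
    refine Finset.mem_erase.mpr ⟨?_, hg1⟩
    rintro rfl
    rcases mem_Qset.mp hg2 with ⟨hgA, -, -⟩ | ⟨hgA, -⟩ | ⟨-, -, hl⟩
    · exact heA hgA
    · exact heA hgA
    · exact absurd hef (not_lt_of_gt hl)
  have := (swap_forest_iff (greedyB_sf A) he hfB hab).mp hsf
  exact this (reach_mono hsub hr)

lemma greedy_unique [Fintype V] [Fintype E] [DecidableEq E] [LinearOrder E] {A B' : Finset E}
    (hsf : IsSpanningForest ends B')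
    (hEA : ∀ f ∈ A, f ∉ B' → ExternallyActive ends B' f)
    (hIA : ∀ e ∈ B', e ∉ A → InternallyActive ends B' e) :
    B' = greedyB ends A := by
  ext e
  rw [mem_greedyB]
  constructor
  · -- e ∈ B' → not spanned by earlier edges
    intro heB' hconn
    obtain ⟨a, b, hab⟩ := sym2_exists_eq (ends e)
    have hC2 : ¬ (edgeGraph ends (B'.erase e)).Reachable a b :=
      not_reach_erase_of_forest hsf.1 heB' hab
    have hex : ∃ f ∈ Qset A e, ∃ c d : V, ends f = s(c, d) ∧
        ¬ (edgeGraph ends (B'.erase e)).Reachable c d := by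
      by_contra hno
      push_neg at hno
      exact hC2 (reach_transfer (fun f hf c d hcd => hno f hf c d hcd) (hconn a b hab))
    obtain ⟨f, hfQ, c, d, hcd, hnr⟩ := hex
    have hfne : f ≠ e := fun h => qlt_irrefl A e (mem_Qset.mp (by rwa [h] at hfQ))
    have hfB' : f ∉ B' := by
      intro hfB'
      exact hnr (reach_adj_of_mem (Finset.mem_erase.mpr ⟨hfne, hfB'⟩) hcd)
    have hswap : IsSpanningForest ends (swapEdge B' e f) :=
      (swap_forest_iff hsf heB' hfB' hcd).mpr hnr
    rcases mem_Qset.mp hfQ with ⟨hfA, heA, hl⟩ | ⟨hfA, heA⟩ | ⟨hfA, heA, hl⟩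
    · exact (hEA f hfA hfB').2 ⟨e, heB', hl, hswap⟩
    · -- f ∈ A, e ∉ A
      rcases lt_or_gt_of_ne hfne with hl | hl
      · exact (hEA f hfA hfB').2 ⟨e, heB', hl, hswap⟩
      · exact (hIA e heB' heA).2 ⟨f, hfB', hl, hswap⟩
    · exact (hIA e heB' heA).2 ⟨f, hfB', hl, hswap⟩
  · -- e spanned by earlier edges is rejected; contrapositive
    intro hnc
    by_contra heB'
    obtain ⟨a, b, hab⟩ := sym2_exists_eq (ends e)
    have hnQ : ¬ (edgeGraph ends (Qset A e)).Reachable a b := by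
      intro hr
      refine hnc (fun c d hcd => ?_)
      rw [hab] at hcd
      rcases Sym2.eq_iff.mp hcd with ⟨h1, h2⟩ | ⟨h1, h2⟩
      · exact h1 ▸ h2 ▸ hr
      · exact h1 ▸ h2 ▸ hr.symm
    have hrB' : (edgeGraph ends B').Reachable a b := by
      refine reach_of_kc_eq (Finset.subset_univ B') hsf.2 ?_
      exact reach_adj_of_mem (Finset.mem_univ e) hab
    have hnS : ¬ (edgeGraph ends (B' ∩ Qset A e)).Reachable a b :=
      fun hr => hnQ (reach_mono Finset.inter_subset_right hr)
    obtain ⟨g, hgB', hgS, hgnr⟩ := crux _ B' rfl hsf.1 Finset.inter_subset_left hrB' hnS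
    have hgQ : g ∉ Qset A e := fun h => hgS (Finset.mem_inter.mpr ⟨hgB', h⟩)
    have hgne : g ≠ e := fun h => heB' (h ▸ hgB')
    have hswap : IsSpanningForest ends (swapEdge B' g e) :=
      (swap_forest_iff hsf hgB' heB' hab).mpr hgnr
    by_cases hgA : g ∈ A
    · by_cases heA : e ∈ A
      · rcases lt_or_gt_of_ne hgne with hl | hl
        · exact hgQ (mem_Qset.mpr (Or.inl ⟨hgA, heA, hl⟩))
        · exact (hEA e heA heB').2 ⟨g, hgB', hl, hswap⟩
      · exact hgQ (mem_Qset.mpr (Or.inr (Or.inl ⟨hgA, heA⟩)))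
    · have hIAg := hIA g hgB' hgA
      rcases lt_or_gt_of_ne hgne with hl | hl
      · exact hIAg.2 ⟨e, heB', hl, hswap⟩
      · by_cases heA : e ∈ A
        · -- g ∉ A, e ∈ A, e < g : then is g ∈ Qset? Qset for e∈A requires g∈A; no.
          -- use externally active of e?  e ∈ A, e ∉ B', g ∈ B', e < g
          exact (hEA e heA heB').2 ⟨g, hgB', hl, hswap⟩
        · exact hgQ (mem_Qset.mpr (Or.inr (Or.inr ⟨hgA, heA, hl⟩)))

end Greedy
section Whitney

open SimpleGraph

variable {V E : Type} {ends : E → Sym2 V}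

/-- A coloring is constant across every edge of `A`. -/
def MonoOn (ends : E → Sym2 V) {n : ℕ} (A : Finset E) (c : V → Fin n) : Prop :=
  ∀ e ∈ A, ∀ a b : V, ends e = s(a, b) → c a = c b

lemma monoOn_const_of_reach {n : ℕ} {A : Finset E} {c : V → Fin n} (hc : MonoOn ends A c)
    {u v : V} (hr : (edgeGraph ends A).Reachable u v) : c u = c v := by
  obtain ⟨w⟩ := hr
  induction w with
  | nil => rfl
  | @cons x z y h p ih =>
    obtain ⟨hne, e, he, hs⟩ := h
    exact (hc e he x z hs).trans ih

lemma card_monoOn [Fintype V] [Fintype E] (A : Finset E) (n : ℕ) :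
    Nat.card {c : V → Fin n // MonoOn ends A c} = n ^ kc ends A := by
  have e : {c : V → Fin n // MonoOn ends A c} ≃
      ((edgeGraph ends A).ConnectedComponent → Fin n) :=
    { toFun := fun c => Quot.lift c.val (fun v w r => monoOn_const_of_reach c.2 r)
      invFun := fun g => ⟨fun v => g ((edgeGraph ends A).connectedComponentMk v),
        fun e he a b hs => congrArg g (ConnectedComponent.sound (reach_adj_of_mem he hs))⟩
      left_inv := fun c => Subtype.ext rfl
      right_inv := by
        intro g
        funext x
        induction x using Quot.ind with
        | _ v => rfl }
  rw [Nat.card_congr e]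
  haveI : Finite (edgeGraph ends A).ConnectedComponent := Quot.finite _
  rw [Nat.card_fun]
  rw [Nat.card_eq_fintype_card (α := Fin n), Fintype.card_fin]
  rfl

/-- The set of monochromatic edges of a coloring. -/
noncomputable def monoEdges (ends : E → Sym2 V) [Fintype E] {n : ℕ} (c : V → Fin n) :
    Finset E :=
  Finset.univ.filter (fun e => ∀ a b : V, ends e = s(a, b) → c a = c b)

lemma monoOn_iff_subset [Fintype E] {n : ℕ} {A : Finset E} {c : V → Fin n} :
    MonoOn ends A c ↔ A ⊆ monoEdges ends c := by
  constructor
  · intro h e he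
    exact Finset.mem_filter.mpr ⟨Finset.mem_univ e, fun a b hs => h e he a b hs⟩
  · intro h e he a b hs
    exact (Finset.mem_filter.mp (h he)).2 a b hs

lemma proper_iff_monoEdges_empty [Fintype E] {n : ℕ} {c : V → Fin n} :
    (∀ e : E, ∀ a b : V, ends e = s(a, b) → c a ≠ c b) ↔ monoEdges ends c = ∅ := by
  constructor
  · intro h
    refine Finset.eq_empty_of_forall_notMem (fun e he => ?_)
    obtain ⟨a, b, hab⟩ := sym2_exists_eq (ends e)
    exact h e a b hab ((Finset.mem_filter.mp he).2 a b hab)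
  · intro h e a b hab hc
    have : e ∈ monoEdges ends c := by
      refine Finset.mem_filter.mpr ⟨Finset.mem_univ e, fun a' b' hab' => ?_⟩
      rw [hab] at hab'
      rcases Sym2.eq_iff.mp hab' with ⟨h1, h2⟩ | ⟨h1, h2⟩
      · exact h1 ▸ h2 ▸ hc
      · exact h1 ▸ h2 ▸ hc.symm
    simp [h] at this

lemma whitney [Fintype V] [Fintype E] (ends : E → Sym2 V) (n : ℕ) :
    (chromCount ends n : ℤ) =
      ∑ A ∈ Finset.univ.powerset, (-1 : ℤ) ^ A.card * (n : ℤ) ^ kc ends A := by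
  classical
  -- express each `n ^ kc A` as a count of colorings
  have hcount : ∀ A : Finset E, ((n : ℤ)) ^ kc ends A =
      ∑ c ∈ (Finset.univ : Finset (V → Fin n)), (if A ⊆ monoEdges ends c then (1 : ℤ) else 0) := by
    intro A
    rw [Finset.sum_boole]
    have h1 : Nat.card {c : V → Fin n // MonoOn ends A c} =
        ((Finset.univ : Finset (V → Fin n)).filter (fun c => A ⊆ monoEdges ends c)).card := by
      rw [Nat.card_eq_fintype_card]
      rw [Fintype.card_subtype]
      congr 1
      apply Finset.filter_congr
      intro c _
      simp [monoOn_iff_subset]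
    rw [← h1, card_monoOn]
    push_cast
    rfl
  have hchrom : (chromCount ends n : ℤ) =
      ∑ c ∈ (Finset.univ : Finset (V → Fin n)),
        (if monoEdges ends c = ∅ then (1 : ℤ) else 0) := by
    rw [Finset.sum_boole]
    have h1 : chromCount ends n =
        ((Finset.univ : Finset (V → Fin n)).filter (fun c => monoEdges ends c = ∅)).card := by
      rw [chromCount, Nat.card_eq_fintype_card, Fintype.card_subtype]
      congr 1
      apply Finset.filter_congr
      intro c _
      exact proper_iff_monoEdges_empty
    rw [h1]
  rw [hchrom]
  have hswap : ∀ c : V → Fin n, (if monoEdges ends c = ∅ then (1 : ℤ) else 0) =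
      ∑ A ∈ Finset.univ.powerset, (if A ⊆ monoEdges ends c then (-1 : ℤ) ^ A.card else 0) := by
    intro c
    rw [← Finset.sum_powerset_neg_one_pow_card (x := monoEdges ends c)]
    rw [← Finset.sum_filter]
    congr 1
    ext A
    simp [Finset.mem_powerset]
  simp_rw [hswap]
  rw [Finset.sum_comm]
  refine Finset.sum_congr rfl (fun A _ => ?_)
  rw [hcount, Finset.mul_sum]
  refine Finset.sum_congr rfl (fun c _ => ?_)
  by_cases h : A ⊆ monoEdges ends c <;> simp [h]

end Whitney
section Assembly

open SimpleGraph

variable {V E : Type} {ends : E → Sym2 V}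

lemma extAct_reach [Fintype V] [Fintype E] [DecidableEq E] [LinearOrder E]
    {B D : Finset E} (hBsf : IsSpanningForest ends B) (hD : D ⊆ intAct ends B) {f : E}
    (hf : ExternallyActive ends B f) {a b : V} (hab : ends f = s(a, b)) :
    (edgeGraph ends (B \ D)).Reachable a b := by
  by_contra hnr
  obtain ⟨hfB, hnEx⟩ := hf
  have hrB : (edgeGraph ends B).Reachable a b :=
    reach_of_kc_eq (Finset.subset_univ B) hBsf.2 (reach_adj_of_mem (Finset.mem_univ f) hab)
  obtain ⟨g, hgB, hgS, hgnr⟩ := crux _ B rfl hBsf.1 Finset.sdiff_subset hrB hnr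
  have hgD : g ∈ D := by
    by_contra hgD
    exact hgS (Finset.mem_sdiff.mpr ⟨hgB, hgD⟩)
  have hgI : InternallyActive ends B g := (Finset.mem_filter.mp (hD hgD)).2
  have hgne : g ≠ f := fun h => hfB (h ▸ hgB)
  have hswap := (swap_forest_iff hBsf hgB hfB hab).mpr hgnr
  rcases lt_or_gt_of_ne hgne with hl | hl
  · exact hgI.2 ⟨f, hfB, hl, hswap⟩
  · exact hnEx ⟨g, hgB, hl, hswap⟩

lemma kc_interval [Fintype V] [Fintype E] [DecidableEq E] [LinearOrder E]
    {B D X : Finset E} (hBsf : IsSpanningForest ends B) (hD : D ⊆ intAct ends B)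
    (hX : X ⊆ extAct ends B) : kc ends ((B \ D) ∪ X) = kc ends (B \ D) := by
  refine kc_eq_of_spanned Finset.subset_union_left ?_
  intro f hf a b hab
  rcases Finset.mem_union.mp hf with hf1 | hf2
  · exact reach_adj_of_mem hf1 hab
  · exact extAct_reach hBsf hD ((Finset.mem_filter.mp (hX hf2)).2) hab

lemma fiber_sum [Fintype V] [Fintype E] [DecidableEq E] [LinearOrder E]
    (ends : E → Sym2 V) (n : ℕ) {B : Finset E} (hBsf : IsSpanningForest ends B) :
    ∑ A ∈ Finset.univ.powerset.filter (fun A => greedyB ends A = B),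
        (-1 : ℤ) ^ A.card * (n : ℤ) ^ kc ends A =
      (∑ D ∈ (intAct ends B).powerset,
          (n : ℤ) ^ (Fintype.card V - (B \ D).card) * (-1 : ℤ) ^ (B \ D).card) *
        (if extAct ends B = ∅ then 1 else 0) := by
  have hIAB : ∀ e ∈ intAct ends B, e ∈ B := fun e he => (Finset.mem_filter.mp he).2.1
  have hEAB : ∀ f ∈ extAct ends B, f ∉ B := fun f hf => (Finset.mem_filter.mp hf).2.1
  have h1 : ∑ A ∈ Finset.univ.powerset.filter (fun A => greedyB ends A = B),
      (-1 : ℤ) ^ A.card * (n : ℤ) ^ kc ends A =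
      ∑ p ∈ (intAct ends B).powerset ×ˢ (extAct ends B).powerset,
        ((n : ℤ) ^ (Fintype.card V - (B \ p.1).card) * (-1 : ℤ) ^ (B \ p.1).card) *
          (-1 : ℤ) ^ p.2.card := by
    refine Finset.sum_nbij' (fun A => (B \ A, A \ B)) (fun p => (B \ p.1) ∪ p.2)
      ?_ ?_ ?_ ?_ ?_
    · -- maps into product
      intro A hA
      obtain ⟨-, hgA⟩ := Finset.mem_filter.mp hA
      refine Finset.mem_product.mpr ⟨Finset.mem_powerset.mpr ?_, Finset.mem_powerset.mpr ?_⟩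
      · intro e he
        obtain ⟨heB, heA⟩ := Finset.mem_sdiff.mp he
        have := greedy_intAct (A := A) (e := e) heA (by rw [hgA]; exact heB)
        rw [hgA] at this
        exact Finset.mem_filter.mpr ⟨Finset.mem_univ e, this⟩
      · intro f hf
        obtain ⟨hfA, hfB⟩ := Finset.mem_sdiff.mp hf
        have := greedy_extAct (A := A) (f := f) hfA (by rw [hgA]; exact hfB)
        rw [hgA] at this
        exact Finset.mem_filter.mpr ⟨Finset.mem_univ f, this⟩
    · -- maps back into fiber
      intro p hp
      obtain ⟨hD, hX⟩ := Finset.mem_product.mp hp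
      rw [Finset.mem_powerset] at hD hX
      refine Finset.mem_filter.mpr ⟨Finset.mem_powerset.mpr (Finset.subset_univ _), ?_⟩
      refine (greedy_unique hBsf ?_ ?_).symm
      · intro f hfA hfB
        rcases Finset.mem_union.mp hfA with hf1 | hf2
        · exact absurd (Finset.mem_sdiff.mp hf1).1 hfB
        · exact (Finset.mem_filter.mp (hX hf2)).2
      · intro e heB heA
        have heD : e ∈ p.1 := by
          by_contra heD
          exact heA (Finset.mem_union_left _ (Finset.mem_sdiff.mpr ⟨heB, heD⟩))
        exact (Finset.mem_filter.mp (hD heD)).2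
    · -- left inverse
      intro A hA
      ext x
      simp only [Finset.mem_union, Finset.mem_sdiff]
      tauto
    · -- right inverse
      intro p hp
      obtain ⟨hD, hX⟩ := Finset.mem_product.mp hp
      rw [Finset.mem_powerset] at hD hX
      have hDB : ∀ x ∈ p.1, x ∈ B := fun x hx => hIAB x (hD hx)
      have hXB : ∀ x ∈ p.2, x ∉ B := fun x hx => hEAB x (hX hx)
      have e1 : B \ ((B \ p.1) ∪ p.2) = p.1 := by
        ext x
        simp only [Finset.mem_sdiff, Finset.mem_union]
        constructor
        · rintro ⟨hxB, hno⟩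
          by_contra hx1
          exact hno (Or.inl ⟨hxB, hx1⟩)
        · intro hx
          refine ⟨hDB x hx, ?_⟩
          rintro (⟨-, hx1⟩ | hx2)
          · exact hx1 hx
          · exact (hXB x hx2) (hDB x hx)
      have e2 : ((B \ p.1) ∪ p.2) \ B = p.2 := by
        ext x
        simp only [Finset.mem_sdiff, Finset.mem_union]
        constructor
        · rintro ⟨hx1 | hx2, hxB⟩
          · exact absurd hx1.1 hxB
          · exact hx2
        · intro hx
          exact ⟨Or.inr hx, hXB x hx⟩
      exact Prod.ext e1 e2
    · -- values agree
      intro A hA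
      obtain ⟨-, hgA⟩ := Finset.mem_filter.mp hA
      have hDi : B \ A ⊆ intAct ends B := by
        intro e he
        obtain ⟨heB, heA⟩ := Finset.mem_sdiff.mp he
        have := greedy_intAct (A := A) (e := e) heA (by rw [hgA]; exact heB)
        rw [hgA] at this
        exact Finset.mem_filter.mpr ⟨Finset.mem_univ e, this⟩
      have hXe : A \ B ⊆ extAct ends B := by
        intro f hf
        obtain ⟨hfA, hfB⟩ := Finset.mem_sdiff.mp hf
        have := greedy_extAct (A := A) (f := f) hfA (by rw [hgA]; exact hfB)
        rw [hgA] at this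
        exact Finset.mem_filter.mpr ⟨Finset.mem_univ f, this⟩
      have hAeq : (B \ (B \ A)) ∪ (A \ B) = A := by
        ext x
        simp only [Finset.mem_union, Finset.mem_sdiff]
        tauto
      have hdisj : Disjoint (B \ (B \ A)) (A \ B) := by
        rw [Finset.disjoint_left]
        intro x hx1 hx2
        exact (Finset.mem_sdiff.mp hx2).2 (Finset.mem_sdiff.mp hx1).1
      have hcard : A.card = (B \ (B \ A)).card + (A \ B).card := by
        conv_lhs => rw [← hAeq]
        rw [Finset.card_union_of_disjoint hdisj]
      have hkc : kc ends A = kc ends (B \ (B \ A)) := by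
        conv_lhs => rw [← hAeq]
        exact kc_interval hBsf hDi hXe
      have hfor : (B \ (B \ A)).card + kc ends (B \ (B \ A)) = Fintype.card V :=
        forest_subset Finset.sdiff_subset hBsf.1
      have hexp : kc ends (B \ (B \ A)) = Fintype.card V - (B \ (B \ A)).card := by omega
      rw [hcard, hkc, hexp, pow_add]
      ring
  rw [h1]
  rw [Finset.sum_product]
  rw [← Finset.sum_powerset_neg_one_pow_card (x := extAct ends B)]
  rw [Finset.sum_mul]
  refine Finset.sum_congr rfl (fun D hD => ?_)
  rw [Finset.mul_sum]

end Assembly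

/-- Broken-cycle form: the chromatic polynomial is the signed sum
over edge sets obtained from spanning forests with no externally active edges by
deleting subsets of internally active edges. -/
theorem chromatic_broken_cycle {V E : Type} [Fintype V] [Fintype E] [DecidableEq E]
    [LinearOrder E] (ends : E → Sym2 V) (n : ℕ) :
    (chromCount ends n : ℤ) =
      ∑ F ∈ Finset.univ.powerset.filter
          (fun A => IsSpanningForest ends A ∧ extAct ends A = ∅),
        ∑ Ai ∈ (intAct ends F).powerset,
          (n : ℤ) ^ (Fintype.card V - (F \ Ai).card) * (-1) ^ (F \ Ai).card := by
  rw [whitney ends n]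
  rw [← Finset.sum_fiberwise_of_maps_to
      (t := Finset.univ.powerset.filter (fun B => IsSpanningForest ends B))
      (g := fun A => greedyB ends A)
      (fun A _ => Finset.mem_filter.mpr
        ⟨Finset.mem_powerset.mpr (Finset.subset_univ _), greedyB_sf A⟩)
      (fun A => (-1 : ℤ) ^ A.card * (n : ℤ) ^ kc ends A)]
  rw [Finset.sum_congr rfl (fun B hB => fiber_sum ends n (Finset.mem_filter.mp hB).2)]
  have h2 : ∀ B : Finset E,
      (∑ D ∈ (intAct ends B).powerset,
          (n : ℤ) ^ (Fintype.card V - (B \ D).card) * (-1 : ℤ) ^ (B \ D).card) *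
        (if extAct ends B = ∅ then 1 else 0) =
      (if extAct ends B = ∅ then
        (∑ D ∈ (intAct ends B).powerset,
          (n : ℤ) ^ (Fintype.card V - (B \ D).card) * (-1 : ℤ) ^ (B \ D).card) else 0) := by
    intro B
    rw [mul_ite, mul_one, mul_zero]
  rw [Finset.sum_congr rfl (fun B _ => h2 B)]
  rw [← Finset.sum_filter, Finset.filter_filter]
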